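/- Let P be a simple histogram and let s and t be vertices with t ∉ I(s). If ℓ(s)_y > r(s)_y, then there is a shortest path in the visibility graph G(P) from s to t that passes through ℓ(s); if ℓ(s)_y < r(s)_y, then there is a shortest path from s to t that passes through r(s). -/

import Mathlib

open Classical Set

noncomputable section

/-- A *double histogram*: an `x`-monotone orthogonal polygon in general position whose
base line lies on the `x`-axis.  It is described by its bottom columns (over the
breakpoints `xs` with depths `d < 0`) and its top columns (over the breakpoints `ys`
with heights `h > 0`).  A *simple histogram* is the special case `n = 1`, where the
upper boundary is the single (base) edge at height `h 0`. -/
structure DoubleHistogram where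
  m : ℕ
  n : ℕ
  hm : 0 < m
  hn : 0 < n
  xs : Fin (m + 1) → ℝ
  ys : Fin (n + 1) → ℝ
  d : Fin m → ℝ
  h : Fin n → ℝ
  xs_mono : StrictMono xs
  ys_mono : StrictMono ys
  left_eq : ys 0 = xs 0
  right_eq : ys (Fin.last n) = xs (Fin.last m)
  d_neg : ∀ i, d i < 0
  h_pos : ∀ j, 0 < h j
  /-- general position: no three vertices on a horizontal line -/
  d_inj : Function.Injective d
  h_inj : Function.Injective h
  /-- general position: no three vertices on a vertical line -/
  gen_pos : ∀ (i : Fin (m + 1)) (j : Fin (n + 1)), xs i = ys j →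
      (i = 0 ∧ j = 0) ∨ (i = Fin.last m ∧ j = Fin.last n)

/-- Among the reals in `A`, the one of minimum absolute value
(i.e. "closest to the base line"). -/
def closestToBase (A : Set ℝ) : ℝ :=
  sSup {y | y ∈ A ∧ ∀ y' ∈ A, |y| ≤ |y'|}

/-- The leftmost point of `S` among those minimizing the distance `|y|` to the base line. -/
def leftmostLowest (S : Set (ℝ × ℝ)) : ℝ × ℝ :=
  (sInf {x | ∃ y, (x, y) ∈ S ∧ ∀ q ∈ S, |y| ≤ |q.2|},
    closestToBase {y | (sInf {x | ∃ y', (x, y') ∈ S ∧ ∀ q ∈ S, |y'| ≤ |q.2|}, y) ∈ S})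

namespace DoubleHistogram

variable (H : DoubleHistogram)

/-- The polygon `P`, as a closed region of the plane. -/
def region : Set (ℝ × ℝ) :=
  (⋃ i : Fin H.m, Icc (H.xs i.castSucc) (H.xs i.succ) ×ˢ Icc (H.d i) 0) ∪
    ⋃ j : Fin H.n, Icc (H.ys j.castSucc) (H.ys j.succ) ×ˢ Icc 0 (H.h j)

/-- The vertex set `V(P)`. -/
def verts : Set (ℝ × ℝ) :=
  (⋃ i : Fin H.m,
      ({(H.xs i.castSucc, H.d i), (H.xs i.succ, H.d i)} : Set (ℝ × ℝ))) ∪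
    ⋃ j : Fin H.n,
      ({(H.ys j.castSucc, H.h j), (H.ys j.succ, H.h j)} : Set (ℝ × ℝ))

/-- `p` and `q` are co-visible: the axis-parallel rectangle they span lies in `P`. -/
def covisible (p q : ℝ × ℝ) : Prop :=
  Icc (min p.1 q.1) (max p.1 q.1) ×ˢ Icc (min p.2 q.2) (max p.2 q.2) ⊆ H.region

lemma covisible_symm {p q : ℝ × ℝ} (hpq : H.covisible p q) : H.covisible q p := by
  unfold covisible at hpq ⊢
  rwa [min_comm q.1 p.1, max_comm q.1 p.1, min_comm q.2 p.2, max_comm q.2 p.2]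

/-- The (unweighted) visibility graph `G(P)` on the vertices of `P`. -/
def visGraph : SimpleGraph ↥H.verts where
  Adj u v := u ≠ v ∧ H.covisible ↑u ↑v
  symm := ⟨fun _ _ hu => ⟨hu.1.symm, H.covisible_symm hu.2⟩⟩
  loopless := ⟨fun _ hu => hu.1 rfl⟩

/-- The closed neighborhood `N(v)`: `v` together with the vertices it sees. -/
def Nbr (v : ℝ × ℝ) : Set (ℝ × ℝ) :=
  {w | w ∈ H.verts ∧ (w = v ∨ H.covisible v w)}

/-- The abscissa where the leftward horizontal ray from `v` hits the boundary of `P`. -/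
def lhit (v : ℝ × ℝ) : ℝ :=
  sInf {x | x ≤ v.1 ∧ Icc x v.1 ×ˢ ({v.2} : Set ℝ) ⊆ H.region}

/-- The abscissa where the rightward horizontal ray from `v` hits the boundary of `P`. -/
def rhit (v : ℝ × ℝ) : ℝ :=
  sSup {x | v.1 ≤ x ∧ Icc v.1 x ×ˢ ({v.2} : Set ℝ) ⊆ H.region}

/-- The `y`-coordinate, among the vertices of `P` with abscissa `x` lying on the same side
of the base line as `side`, of the one closest to the base line (i.e. the endpoint of the
vertical edge at `x` closer to the base line). -/
def nearY (x : ℝ) (side : ℝ) : ℝ :=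
  if side < 0 then sSup {y | y < 0 ∧ (x, y) ∈ H.verts}
  else sInf {y | 0 < y ∧ (x, y) ∈ H.verts}

/-- The left point `ℓ(v)` (double-histogram version): if the leftward ray from `v` hits the
left boundary then the hit point, otherwise the endpoint of the hit vertical edge closer to
the base line. -/
def lpt (v : ℝ × ℝ) : ℝ × ℝ :=
  if H.lhit v = H.xs 0 then (H.xs 0, v.2) else (H.lhit v, H.nearY (H.lhit v) v.2)

/-- The right point `r(v)` (double-histogram version). -/
def rpt (v : ℝ × ℝ) : ℝ × ℝ :=
  if H.rhit v = H.xs (Fin.last H.m) then (H.xs (Fin.last H.m), v.2)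
  else (H.rhit v, H.nearY (H.rhit v) v.2)

/-- The left base vertex (for a simple histogram, i.e. `n = 1`). -/
def baseL : ℝ × ℝ := (H.xs 0, H.h ⟨0, H.hn⟩)

/-- The right base vertex (for a simple histogram, i.e. `n = 1`). -/
def baseR : ℝ × ℝ := (H.xs (Fin.last H.m), H.h ⟨0, H.hn⟩)

/-- The left point `ℓ(v)` (simple-histogram version): if the leftward ray from `v` hits the
left boundary then the left base vertex, otherwise the endpoint of the hit vertical edge
closer to the base edge. -/
def lptS (v : ℝ × ℝ) : ℝ × ℝ :=
  if H.lhit v = H.xs 0 then H.baseL else (H.lhit v, H.nearY (H.lhit v) v.2)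

/-- The right point `r(v)` (simple-histogram version). -/
def rptS (v : ℝ × ℝ) : ℝ × ℝ :=
  if H.rhit v = H.xs (Fin.last H.m) then H.baseR
  else (H.rhit v, H.nearY (H.rhit v) v.2)

/-- The interval `[p, q]`: all vertices of `P` between `p` and `q`. -/
def ivl (p q : ℝ × ℝ) : Set (ℝ × ℝ) :=
  {u | u ∈ H.verts ∧ p.1 ≤ u.1 ∧ u.1 ≤ q.1}

/-- The interval `I(v) = [ℓ(v), r(v)]` of a vertex (double-histogram version). -/
def Iv (v : ℝ × ℝ) : Set (ℝ × ℝ) := H.ivl (H.lpt v) (H.rpt v)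

/-- The interval `I(v) = [ℓ(v), r(v)]` of a vertex (simple-histogram version). -/
def IvS (v : ℝ × ℝ) : Set (ℝ × ℝ) := H.ivl (H.lptS v) (H.rptS v)

/-- The corresponding vertex `cv(v)`: the unique other vertex sharing a horizontal edge
(equivalently, by general position, the `y`-coordinate) with `v`. -/
def cv (v : ℝ × ℝ) : ℝ × ℝ :=
  (sSup {x | (x, v.2) ∈ H.verts ∧ x ≠ v.1}, v.2)

/-- `v` is a left vertex: the left endpoint of its horizontal edge. -/
def IsLeftVert (v : ℝ × ℝ) : Prop :=
  (∃ i : Fin H.m, v = (H.xs i.castSucc, H.d i)) ∨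
    ∃ j : Fin H.n, v = (H.ys j.castSucc, H.h j)

/-- `v` is a right vertex: the right endpoint of its horizontal edge. -/
def IsRightVert (v : ℝ × ℝ) : Prop :=
  (∃ i : Fin H.m, v = (H.xs i.succ, H.d i)) ∨
    ∃ j : Fin H.n, v = (H.ys j.succ, H.h j)

/-- `v` is an `ℓ`-reflex vertex (a left vertex with interior angle `3π/2`). -/
def IsLReflex (v : ℝ × ℝ) : Prop :=
  (∃ i : Fin H.m, ∃ _ : 0 < (i : ℕ),
      v = (H.xs i.castSucc, H.d i) ∧
        H.d ⟨(i : ℕ) - 1, lt_of_le_of_lt (Nat.sub_le _ _) i.isLt⟩ < H.d i) ∨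
    ∃ j : Fin H.n, ∃ _ : 0 < (j : ℕ),
      v = (H.ys j.castSucc, H.h j) ∧
        H.h j < H.h ⟨(j : ℕ) - 1, lt_of_le_of_lt (Nat.sub_le _ _) j.isLt⟩

/-- `v` is an `r`-reflex vertex (a right vertex with interior angle `3π/2`). -/
def IsRReflex (v : ℝ × ℝ) : Prop :=
  (∃ i : Fin H.m, ∃ hi : (i : ℕ) + 1 < H.m,
      v = (H.xs i.succ, H.d i) ∧ H.d ⟨(i : ℕ) + 1, hi⟩ < H.d i) ∨
    ∃ j : Fin H.n, ∃ hj : (j : ℕ) + 1 < H.n,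
      v = (H.ys j.succ, H.h j) ∧ H.h j < H.h ⟨(j : ℕ) + 1, hj⟩

/-- `v` is a reflex vertex. -/
def IsReflex (v : ℝ × ℝ) : Prop := H.IsLReflex v ∨ H.IsRReflex v

/-- The near dominator `nd(s,t)`: for `t` strictly right of `s`, the rightmost vertex of
`N(s)` to the left of `t`, ties broken towards the base line (symmetric otherwise). -/
def nd (s t : ℝ × ℝ) : ℝ × ℝ :=
  if s.1 < t.1 then
    let nx := sSup {x | (∃ y, (x, y) ∈ H.Nbr s) ∧ x ≤ t.1}
    (nx, closestToBase {y | (nx, y) ∈ H.Nbr s})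
  else
    let nx := sInf {x | (∃ y, (x, y) ∈ H.Nbr s) ∧ t.1 ≤ x}
    (nx, closestToBase {y | (nx, y) ∈ H.Nbr s})

/-- The far dominator `fd(s,t)`: for `t` strictly right of `s`, the leftmost vertex of
`N(s)` to the right of `t`, ties broken towards the base line; if there is no such vertex,
the point `r(s)` (symmetric otherwise). -/
def fd (s t : ℝ × ℝ) : ℝ × ℝ :=
  if s.1 < t.1 then
    if ∃ w ∈ H.Nbr s, t.1 ≤ w.1 then
      let nx := sInf {x | (∃ y, (x, y) ∈ H.Nbr s) ∧ t.1 ≤ x}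
      (nx, closestToBase {y | (nx, y) ∈ H.Nbr s})
    else H.rpt s
  else
    if ∃ w ∈ H.Nbr s, w.1 ≤ t.1 then
      let nx := sSup {x | (∃ y, (x, y) ∈ H.Nbr s) ∧ x ≤ t.1}
      (nx, closestToBase {y | (nx, y) ∈ H.Nbr s})
    else H.lpt s

/-- The sequence `a^i(s)`: `a^0(s) = s`, and `a^i(s)` is the leftmost vertex of
`A^i(s) = {v ∈ N(s) : ℓ(v)_x < ℓ(a^{i-1}(s))_x}` (ties towards the base line),
or `a^{i-1}(s)` if `A^i(s)` is empty. -/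
def aSeq (s : ℝ × ℝ) : ℕ → ℝ × ℝ := fun k =>
  Nat.rec (motive := fun _ => ℝ × ℝ) s
    (fun _ prev =>
      let A : Set (ℝ × ℝ) := {v | v ∈ H.Nbr s ∧ (H.lpt v).1 < (H.lpt prev).1}
      if A = ∅ then prev
      else
        let ax := sInf {x | ∃ y, (x, y) ∈ A}
        (ax, closestToBase {y | (ax, y) ∈ A}))
    k

/-- The sequence `b^i(s)`: `b^0(s) = s`, and `b^i(s)` is the rightmost vertex of
`B^i(s) = {v ∈ N(s) : r(v)_x > r(b^{i-1}(s))_x}` (ties towards the base line),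
or `b^{i-1}(s)` if `B^i(s)` is empty. -/
def bSeq (s : ℝ × ℝ) : ℕ → ℝ × ℝ := fun k =>
  Nat.rec (motive := fun _ => ℝ × ℝ) s
    (fun _ prev =>
      let B : Set (ℝ × ℝ) := {v | v ∈ H.Nbr s ∧ (H.rpt prev).1 < (H.rpt v).1}
      if B = ∅ then prev
      else
        let bx := sSup {x | ∃ y, (x, y) ∈ B}
        (bx, closestToBase {y | (bx, y) ∈ B}))
    k

/-- The pair of the `k`-th bottom dominator `bd^k(s)` and `k`-th top dominator `td^k(s)`:
`bd^0(s) = td^0(s) = s`; for `k > 0`, with `I^k(s) = I(bd^{k-1}(s)) ∪ I(td^{k-1}(s))`,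
`bd^k(s)` is the leftmost vertex of `I^k(s)⁻` minimizing the distance to the base line,
and `td^k(s)` the leftmost vertex of `I^k(s)⁺` minimizing the distance to the base line;
if one of the two sets is empty, the corresponding dominator equals the other one. -/
def bdtd (s : ℝ × ℝ) : ℕ → (ℝ × ℝ) × (ℝ × ℝ) := fun k =>
  Nat.rec (motive := fun _ => (ℝ × ℝ) × (ℝ × ℝ)) (s, s)
    (fun _ p =>
      let J : Set (ℝ × ℝ) := H.Iv p.1 ∪ H.Iv p.2
      let Jm : Set (ℝ × ℝ) := {v | v ∈ J ∧ v.2 < 0}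
      let Jp : Set (ℝ × ℝ) := {v | v ∈ J ∧ 0 < v.2}
      if Jm = ∅ then (leftmostLowest Jp, leftmostLowest Jp)
      else if Jp = ∅ then (leftmostLowest Jm, leftmostLowest Jm)
      else (leftmostLowest Jm, leftmostLowest Jp))
    k

/-- The `k`-th interval `I^k(s)`: `I^0(s) = {s}` and
`I^{k+1}(s) = I(bd^k(s)) ∪ I(td^k(s))`. -/
def Ipow (s : ℝ × ℝ) : ℕ → Set (ℝ × ℝ) := fun k =>
  Nat.rec (motive := fun _ => Set (ℝ × ℝ)) {s}
    (fun k _ => H.Iv (H.bdtd s k).1 ∪ H.Iv (H.bdtd s k).2) k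

/-- `w` lies on a shortest path from `s` to `t` in the visibility graph. -/
def OnShortestPath (s t w : ↥H.verts) : Prop :=
  ∃ p : H.visGraph.Walk s t, p.length = H.visGraph.dist s t ∧ w ∈ p.support

end DoubleHistogram

/-- A routing scheme for a graph `G`: every vertex carries a binary label and a binary
routing table, and the routing function maps (link table of the current vertex, routing
table of the current vertex, label of the target, current header) to the next vertex
together with the new header. -/
structure RoutingScheme {V : Type} (G : SimpleGraph V) where
  lab : V → List Bool
  tab : V → List Bool
  route : Set (List Bool) → List Bool → List Bool → List Bool → V × List Bool

namespace RoutingScheme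

variable {V : Type} {G : SimpleGraph V} (R : RoutingScheme G)

/-- One routing step at vertex `p` with header `h`, towards the target `t`: the routing
function is applied to the link table of `p` (the labels of its closed neighborhood),
the routing table of `p`, the label of `t` and the header `h`. -/
def step (t p : V) (h : List Bool) : V × List Bool :=
  R.route (R.lab '' {w | w = p ∨ G.Adj p w}) (R.tab p) (R.lab t) h

/-- The routing sequence from `s` towards `t`, starting with the empty header. -/
def seq (s t : V) : ℕ → V × List Bool := fun k =>
  Nat.rec (motive := fun _ => V × List Bool) (s, ([] : List Bool))
    (fun _ q => R.step t q.1 q.2) k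

end RoutingScheme
/-! ### Auxiliary development for `taking_higher_is_better` -/

namespace DoubleHistogram

variable {H : DoubleHistogram}

/-- The height of the base edge of a simple histogram. -/
def hzero (H : DoubleHistogram) : ℝ := H.h ⟨0, H.hn⟩

/-- A horizontal segment lies in the region. -/
def seg (H : DoubleHistogram) (a b y : ℝ) : Prop :=
  ∀ x : ℝ, a ≤ x → x ≤ b → (x, y) ∈ H.region

lemma seg_sub {a b a' b' y : ℝ} (h : H.seg a b y) (ha : a ≤ a') (hb : b' ≤ b) :
    H.seg a' b' y := fun x hx1 hx2 => h x (ha.trans hx1) (hx2.trans hb)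

lemma seg_union {a b a' b' x0 y : ℝ} (h : H.seg a b y) (h' : H.seg a' b' y)
    (h0 : a ≤ x0) (h1 : x0 ≤ b) (h2 : a' ≤ x0) (h3 : x0 ≤ b') :
    H.seg (min a a') (max b b') y := by
  intro x hx1 hx2
  rcases le_total x x0 with hc | hc
  · rcases min_le_iff.1 hx1 with h4 | h4
    · exact h x h4 (hc.trans h1)
    · exact h' x h4 (hc.trans h3)
  · rcases le_max_iff.1 hx2 with h4 | h4
    · exact h x (h0.trans hc) h4
    · exact h' x (h2.trans hc) h4

lemma prod_subset_iff_seg {a b y : ℝ} :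
    Icc a b ×ˢ ({y} : Set ℝ) ⊆ H.region ↔ H.seg a b y := by
  constructor
  · intro h x h1 h2
    exact h (Set.mk_mem_prod ⟨h1, h2⟩ rfl)
  · rintro h ⟨x, y'⟩ ⟨hx, hy⟩
    rcases Set.mem_singleton_iff.1 hy
    exact h x hx.1 hx.2

lemma region_bounds {p : ℝ × ℝ} (hp : p ∈ H.region) :
    H.xs 0 ≤ p.1 ∧ p.1 ≤ H.xs (Fin.last H.m) := by
  rcases hp with hp | hp
  · obtain ⟨i, hi⟩ := Set.mem_iUnion.1 hp
    obtain ⟨hx, -⟩ := hi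
    exact ⟨(H.xs_mono.monotone (Fin.zero_le _)).trans hx.1,
      hx.2.trans (H.xs_mono.monotone (Fin.le_last _))⟩
  · obtain ⟨j, hj⟩ := Set.mem_iUnion.1 hp
    obtain ⟨hx, -⟩ := hj
    constructor
    · rw [← H.left_eq]; exact (H.ys_mono.monotone (Fin.zero_le _)).trans hx.1
    · rw [← H.right_eq]; exact hx.2.trans (H.ys_mono.monotone (Fin.le_last _))

lemma fin1_eq (hn : H.n = 1) (j : Fin H.n) : j = ⟨0, H.hn⟩ := by
  apply Fin.ext
  have := j.isLt
  omega

lemma top_box (hn : H.n = 1) {x y : ℝ} (hx0 : H.xs 0 ≤ x) (hx1 : x ≤ H.xs (Fin.last H.m))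
    (hy0 : 0 ≤ y) (hy1 : y ≤ H.hzero) : (x, y) ∈ H.region := by
  right
  refine Set.mem_iUnion.2 ⟨⟨0, H.hn⟩, ⟨⟨?_, ?_⟩, hy0, hy1⟩⟩
  · have h0 : (Fin.castSucc (⟨0, H.hn⟩ : Fin H.n)) = (0 : Fin (H.n + 1)) := rfl
    rw [h0, H.left_eq]; exact hx0
  · have h1 : (Fin.succ (⟨0, H.hn⟩ : Fin H.n)) = Fin.last H.n := by
      apply Fin.ext; simp [hn]
    rw [h1, H.right_eq]; exact hx1

lemma region_up (hn : H.n = 1) {x y y' : ℝ} (hp : (x, y) ∈ H.region)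
    (h1 : y ≤ y') (h2 : y' ≤ H.hzero) : (x, y') ∈ H.region := by
  have hb := region_bounds hp
  rcases le_or_gt y' 0 with h3 | h3
  · rcases hp with hp | hp
    · obtain ⟨i, hi⟩ := Set.mem_iUnion.1 hp
      obtain ⟨hx, hy⟩ := hi
      exact Or.inl (Set.mem_iUnion.2 ⟨i, ⟨hx, hy.1.trans h1, h3⟩⟩)
    · obtain ⟨j, hj⟩ := Set.mem_iUnion.1 hp
      obtain ⟨hx, hy⟩ := hj
      have : y' = 0 := le_antisymm h3 (hy.1.trans h1)
      exact top_box hn hb.1 hb.2 (le_of_eq this.symm) h2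
  · exact top_box hn hb.1 hb.2 h3.le h2

lemma seg_up (hn : H.n = 1) {a b y y' : ℝ} (h : H.seg a b y) (h1 : y ≤ y')
    (h2 : y' ≤ H.hzero) : H.seg a b y' :=
  fun x hx1 hx2 => region_up hn (h x hx1 hx2) h1 h2

lemma region_neg {x y : ℝ} (hy : y < 0) :
    (x, y) ∈ H.region ↔
      ∃ i : Fin H.m, H.xs i.castSucc ≤ x ∧ x ≤ H.xs i.succ ∧ H.d i ≤ y := by
  constructor
  · rintro (hp | hp)
    · obtain ⟨i, hi⟩ := Set.mem_iUnion.1 hp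
      exact ⟨i, hi.1.1, hi.1.2, hi.2.1⟩
    · obtain ⟨j, hj⟩ := Set.mem_iUnion.1 hp
      exact absurd hj.2.1 (not_le.2 hy)
  · rintro ⟨i, h1, h2, h3⟩
    exact Or.inl (Set.mem_iUnion.2 ⟨i, ⟨h1, h2⟩, h3, hy.le⟩)

lemma col_seg (i : Fin H.m) : H.seg (H.xs i.castSucc) (H.xs i.succ) (H.d i) :=
  fun x hx1 hx2 => (region_neg (H.d_neg i)).2 ⟨i, hx1, hx2, le_rfl⟩

lemma col_unique {i j : Fin H.m} {x : ℝ} (h1 : H.xs i.castSucc < x) (h2 : x < H.xs i.succ)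
    (h3 : H.xs j.castSucc ≤ x) (h4 : x ≤ H.xs j.succ) : j = i := by
  by_contra hne
  have hne' : (j : ℕ) ≠ (i : ℕ) := fun h => hne (Fin.ext h)
  rcases hne'.lt_or_gt with hlt | hlt
  · have : H.xs j.succ ≤ H.xs i.castSucc :=
      H.xs_mono.monotone (by simp only [Fin.le_def, Fin.val_succ, Fin.coe_castSucc]; omega)
    linarith
  · have : H.xs i.succ ≤ H.xs j.castSucc :=
      H.xs_mono.monotone (by simp only [Fin.le_def, Fin.val_succ, Fin.coe_castSucc]; omega)
    linarith

end DoubleHistogram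
namespace DoubleHistogram

variable {H : DoubleHistogram}

lemma baseL_def : H.baseL = (H.xs 0, H.hzero) := rfl

lemma baseR_def : H.baseR = (H.xs (Fin.last H.m), H.hzero) := rfl

lemma hzero_pos : 0 < H.hzero := H.h_pos _

lemma verts_char (hn : H.n = 1) {v : ℝ × ℝ} :
    v ∈ H.verts ↔
      (∃ i : Fin H.m, v = (H.xs i.castSucc, H.d i) ∨ v = (H.xs i.succ, H.d i)) ∨
        v = H.baseL ∨ v = H.baseR := by
  have h0 : (Fin.castSucc (⟨0, H.hn⟩ : Fin H.n)) = (0 : Fin (H.n + 1)) := rfl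
  have h1 : (Fin.succ (⟨0, H.hn⟩ : Fin H.n)) = Fin.last H.n := by
    apply Fin.ext; simp [hn]
  constructor
  · rintro (hv | hv)
    · obtain ⟨i, hi⟩ := Set.mem_iUnion.1 hv
      rcases hi with hi | hi
      · exact Or.inl ⟨i, Or.inl hi⟩
      · exact Or.inl ⟨i, Or.inr (Set.mem_singleton_iff.1 hi)⟩
    · obtain ⟨j, hj⟩ := Set.mem_iUnion.1 hv
      rcases fin1_eq hn j
      rcases hj with hj | hj
      · refine Or.inr (Or.inl ?_)
        rw [hj, baseL_def, h0, H.left_eq]; rfl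
      · refine Or.inr (Or.inr ?_)
        rw [Set.mem_singleton_iff.1 hj, baseR_def, h1, H.right_eq]; rfl
  · rintro ((⟨i, hi | hi⟩) | hv | hv)
    · exact Or.inl (Set.mem_iUnion.2 ⟨i, Or.inl hi⟩)
    · exact Or.inl (Set.mem_iUnion.2 ⟨i, Or.inr (Set.mem_singleton_iff.2 hi)⟩)
    · refine Or.inr (Set.mem_iUnion.2 ⟨⟨0, H.hn⟩, Or.inl ?_⟩)
      rw [hv, baseL_def, h0, H.left_eq]; rfl
    · refine Or.inr (Set.mem_iUnion.2 ⟨⟨0, H.hn⟩, Or.inr (Set.mem_singleton_iff.2 ?_)⟩)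
      rw [hv, baseR_def, h1, H.right_eq]; rfl

lemma baseL_mem (hn : H.n = 1) : H.baseL ∈ H.verts :=
  (verts_char hn).2 (Or.inr (Or.inl rfl))

lemma baseR_mem (hn : H.n = 1) : H.baseR ∈ H.verts :=
  (verts_char hn).2 (Or.inr (Or.inr rfl))

lemma verts_y_cases (hn : H.n = 1) {v : ℝ × ℝ} (hv : v ∈ H.verts) :
    v.2 < 0 ∨ v = H.baseL ∨ v = H.baseR := by
  rcases (verts_char hn).1 hv with ⟨i, hi | hi⟩ | hv' | hv'
  · exact Or.inl (by rw [hi]; exact H.d_neg i)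
  · exact Or.inl (by rw [hi]; exact H.d_neg i)
  · exact Or.inr (Or.inl hv')
  · exact Or.inr (Or.inr hv')

lemma verts_y_le (hn : H.n = 1) {v : ℝ × ℝ} (hv : v ∈ H.verts) : v.2 ≤ H.hzero := by
  rcases verts_y_cases hn hv with h | h | h
  · exact h.le.trans hzero_pos.le
  · rw [h]; exact le_rfl
  · rw [h]; exact le_rfl

lemma verts_mem_region (hn : H.n = 1) {v : ℝ × ℝ} (hv : v ∈ H.verts) : v ∈ H.region := by
  rcases (verts_char hn).1 hv with ⟨i, hi | hi⟩ | hv' | hv'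
  · rw [hi]
    exact col_seg i _ le_rfl (H.xs_mono (Fin.castSucc_lt_succ (i := i))).le
  · rw [hi]
    exact col_seg i _ (H.xs_mono (Fin.castSucc_lt_succ (i := i))).le le_rfl
  · rw [hv']
    exact top_box hn le_rfl (H.xs_mono.monotone (Fin.zero_le _)) hzero_pos.le le_rfl
  · rw [hv']
    exact top_box hn (H.xs_mono.monotone (Fin.zero_le _)) le_rfl hzero_pos.le le_rfl

lemma own_col (hn : H.n = 1) {v : ℝ × ℝ} (hv : v ∈ H.verts) (hv2 : v.2 < 0) :
    ∃ i : Fin H.m, (v.1 = H.xs i.castSucc ∨ v.1 = H.xs i.succ) ∧ v.2 = H.d i := by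
  rcases (verts_char hn).1 hv with ⟨i, hi | hi⟩ | hv' | hv'
  · exact ⟨i, Or.inl (by rw [hi]), by rw [hi]⟩
  · exact ⟨i, Or.inr (by rw [hi]), by rw [hi]⟩
  · rw [hv'] at hv2; exact absurd hzero_pos (not_lt.2 hv2.le)
  · rw [hv'] at hv2; exact absurd hzero_pos (not_lt.2 hv2.le)

/-! ### `lhit` and `rhit` -/

lemma region_closed : IsClosed H.region := by
  unfold region
  exact IsClosed.union
    (isClosed_iUnion_of_finite fun i => isClosed_Icc.prod isClosed_Icc)
    (isClosed_iUnion_of_finite fun j => isClosed_Icc.prod isClosed_Icc)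

section hits

variable {v : ℝ × ℝ} (hv : v ∈ H.region)

private lemma lset_eq :
    {x | x ≤ v.1 ∧ Icc x v.1 ×ˢ ({v.2} : Set ℝ) ⊆ H.region} =
      {x | x ≤ v.1 ∧ H.seg x v.1 v.2} := by
  ext x; exact and_congr_right fun _ => prod_subset_iff_seg

private lemma rset_eq :
    {x | v.1 ≤ x ∧ Icc v.1 x ×ˢ ({v.2} : Set ℝ) ⊆ H.region} =
      {x | v.1 ≤ x ∧ H.seg v.1 x v.2} := by
  ext x; exact and_congr_right fun _ => prod_subset_iff_seg

include hv

private lemma lset_nonempty : {x | x ≤ v.1 ∧ H.seg x v.1 v.2}.Nonempty := by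
  refine ⟨v.1, le_rfl, fun x h1 h2 => ?_⟩
  have : x = v.1 := le_antisymm h2 h1
  rw [this]; rwa [Prod.mk.eta]

private lemma rset_nonempty : {x | v.1 ≤ x ∧ H.seg v.1 x v.2}.Nonempty := by
  refine ⟨v.1, le_rfl, fun x h1 h2 => ?_⟩
  have : x = v.1 := le_antisymm h2 h1
  rw [this]; rwa [Prod.mk.eta]

omit hv in
private lemma lset_bdd : BddBelow {x | x ≤ v.1 ∧ H.seg x v.1 v.2} := by
  refine ⟨H.xs 0, fun x hx => ?_⟩
  exact (region_bounds (hx.2 x le_rfl hx.1)).1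

omit hv in
private lemma rset_bdd : BddAbove {x | v.1 ≤ x ∧ H.seg v.1 x v.2} := by
  refine ⟨H.xs (Fin.last H.m), fun x hx => ?_⟩
  exact (region_bounds (hx.2 x hx.1 le_rfl)).2

lemma lhit_le : H.lhit v ≤ v.1 := by
  rw [lhit, lset_eq]
  refine csInf_le lset_bdd ⟨le_rfl, fun x h1 h2 => ?_⟩
  have : x = v.1 := le_antisymm h2 h1
  rw [this]; rwa [Prod.mk.eta]

lemma le_rhit : v.1 ≤ H.rhit v := by
  rw [rhit, rset_eq]
  refine le_csSup rset_bdd ⟨le_rfl, fun x h1 h2 => ?_⟩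
  have : x = v.1 := le_antisymm h2 h1
  rw [this]; rwa [Prod.mk.eta]

lemma xs0_le_lhit : H.xs 0 ≤ H.lhit v := by
  rw [lhit, lset_eq]
  refine le_csInf (lset_nonempty hv) fun x hx => ?_
  exact (region_bounds (hx.2 x le_rfl hx.1)).1

lemma rhit_le_xsM : H.rhit v ≤ H.xs (Fin.last H.m) := by
  rw [rhit, rset_eq]
  refine csSup_le (rset_nonempty hv) fun x hx => ?_
  exact (region_bounds (hx.2 x hx.1 le_rfl)).2

lemma seg_lhit : H.seg (H.lhit v) v.1 v.2 := by
  intro x h1 h2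
  rcases eq_or_lt_of_le h1 with heq | hlt
  · -- x = lhit v : use closedness
    have hC : IsClosed {z : ℝ | (z, v.2) ∈ H.region} :=
      region_closed.preimage (continuous_id.prodMk continuous_const)
    have hsub : {x | x ≤ v.1 ∧ H.seg x v.1 v.2} ⊆ {z : ℝ | (z, v.2) ∈ H.region} :=
      fun z hz => hz.2 z le_rfl hz.1
    have hmem : H.lhit v ∈ closure {x | x ≤ v.1 ∧ H.seg x v.1 v.2} := by
      rw [lhit, lset_eq]
      exact csInf_mem_closure (lset_nonempty hv) lset_bdd
    have := (closure_minimal hsub hC) hmem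
    rwa [← heq]
  · have hx : ∃ z ∈ {x | x ≤ v.1 ∧ H.seg x v.1 v.2}, z < x := by
      rw [lhit, lset_eq] at hlt
      exact (csInf_lt_iff lset_bdd (lset_nonempty hv)).1 hlt
    obtain ⟨z, hz, hzx⟩ := hx
    exact hz.2 x hzx.le h2

lemma seg_rhit : H.seg v.1 (H.rhit v) v.2 := by
  intro x h1 h2
  rcases eq_or_lt_of_le h2 with heq | hlt
  · have hC : IsClosed {z : ℝ | (z, v.2) ∈ H.region} :=
      region_closed.preimage (continuous_id.prodMk continuous_const)
    have hsub : {x | v.1 ≤ x ∧ H.seg v.1 x v.2} ⊆ {z : ℝ | (z, v.2) ∈ H.region} :=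
      fun z hz => hz.2 z hz.1 le_rfl
    have hmem : H.rhit v ∈ closure {x | v.1 ≤ x ∧ H.seg v.1 x v.2} := by
      rw [rhit, rset_eq]
      exact csSup_mem_closure (rset_nonempty hv) rset_bdd
    have := (closure_minimal hsub hC) hmem
    rwa [heq]
  · have hx : ∃ z ∈ {x | v.1 ≤ x ∧ H.seg v.1 x v.2}, x < z := by
      rw [rhit, rset_eq] at hlt
      exact (lt_csSup_iff rset_bdd (rset_nonempty hv)).1 hlt
    obtain ⟨z, hz, hzx⟩ := hx
    exact hz.2 x h1 hzx.le

lemma seg_full : H.seg (H.lhit v) (H.rhit v) v.2 := by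
  have h := seg_union (seg_lhit hv) (seg_rhit hv) (lhit_le hv) le_rfl le_rfl (le_rhit hv)
  rwa [min_eq_left (lhit_le hv), max_eq_right (le_rhit hv)] at h

lemma seg_between {a b : ℝ} (hseg : H.seg a b v.2) (h1 : a ≤ v.1) (h2 : v.1 ≤ b) :
    H.lhit v ≤ a ∧ b ≤ H.rhit v := by
  constructor
  · rw [lhit, lset_eq]
    exact csInf_le lset_bdd ⟨h1, seg_sub hseg le_rfl h2⟩
  · rw [rhit, rset_eq]
    exact le_csSup rset_bdd ⟨h2, seg_sub hseg h1 le_rfl⟩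

end hits

end DoubleHistogram
namespace DoubleHistogram

variable {H : DoubleHistogram}

lemma covisible_iff (hn : H.n = 1) {p q : ℝ × ℝ} (hp : p ∈ H.verts) (hq : q ∈ H.verts)
    (hpq : p.2 ≤ q.2) :
    H.covisible p q ↔ (H.lhit p ≤ q.1 ∧ q.1 ≤ H.rhit p) := by
  have hpr := verts_mem_region hn hp
  constructor
  · intro hcov
    have hseg : H.seg (min p.1 q.1) (max p.1 q.1) p.2 := by
      intro x h1 h2
      exact hcov (Set.mk_mem_prod ⟨h1, h2⟩
        ⟨min_le_left _ _ |>.trans_eq (min_eq_left hpq).symm |>.trans_eq (min_eq_left hpq),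
          le_max_left _ _⟩)
    have hseg' : H.seg (min p.1 q.1) (max p.1 q.1) p.2 := hseg
    have hb := seg_between hpr hseg' (min_le_left _ _) (le_max_left _ _)
    exact ⟨hb.1.trans (min_le_right _ _), (le_max_right p.1 q.1).trans hb.2⟩
  · rintro ⟨h1, h2⟩
    rintro ⟨x, y⟩ ⟨hx, hy⟩
    rw [Set.mem_Icc] at hx hy
    have hxl : H.lhit p ≤ x := le_trans (le_min (lhit_le hpr) h1) hx.1
    have hxr : x ≤ H.rhit p := hx.2.trans (max_le (le_rhit hpr) h2)
    have hreg : (x, p.2) ∈ H.region := seg_full hpr x hxl hxr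
    have hy1 : p.2 ≤ y := (min_eq_left hpq ▸ hy.1)
    have hy2 : y ≤ q.2 := hy.2.trans_eq (max_eq_right hpq)
    exact region_up hn hreg hy1 (hy2.trans (verts_y_le hn hq))

lemma J_mono (hn : H.n = 1) {u w : ℝ × ℝ} (hu : u ∈ H.verts) (hw : w ∈ H.verts)
    (h2 : u.2 ≤ w.2) (h3 : H.lhit u ≤ w.1) (h4 : w.1 ≤ H.rhit u) :
    H.lhit w ≤ H.lhit u ∧ H.rhit u ≤ H.rhit w :=
  seg_between (verts_mem_region hn hw)
    (seg_up hn (seg_full (verts_mem_region hn hu)) h2 (verts_y_le hn hw)) h3 h4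

lemma cross_lemma (hn : H.n = 1) {v : ℝ × ℝ} (hv : v ∈ H.verts) {a b z x0 x1 : ℝ}
    (hz : z ≤ H.hzero) (hs : H.seg a b z)
    (h00 : a ≤ x0) (h01 : x0 ≤ b) (h10 : a ≤ x1) (h11 : x1 ≤ b)
    (hi0 : H.lhit v ≤ x0) (hi1 : x0 ≤ H.rhit v)
    (hout : ¬ (H.lhit v ≤ x1 ∧ x1 ≤ H.rhit v)) : v.2 < z := by
  by_contra hcon
  push_neg at hcon
  have hvr := verts_mem_region hn hv
  have hs' : H.seg a b v.2 := seg_up hn hs hcon (verts_y_le hn hv)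
  have hun := seg_union hs' (seg_full hvr) h00 h01 hi0 hi1
  have hb := seg_between hvr hun
    ((min_le_right _ _).trans (lhit_le hvr)) ((le_rhit hvr).trans (le_max_right _ _))
  exact hout ⟨hb.1.trans ((min_le_left _ _).trans h10), h11.trans ((le_max_left _ _).trans hb.2)⟩

lemma bottom_strict (hn : H.n = 1) {v : ℝ × ℝ} (hv : v ∈ H.verts) (hv2 : v.2 < 0) :
    H.lhit v < H.rhit v := by
  obtain ⟨i, hform, hyi⟩ := own_col hn hv hv2
  have hcs : H.seg (H.xs i.castSucc) (H.xs i.succ) v.2 := by rw [hyi]; exact col_seg i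
  have hvin : H.xs i.castSucc ≤ v.1 ∧ v.1 ≤ H.xs i.succ := by
    rcases hform with h | h
    · exact ⟨h.ge, h.le.trans (H.xs_mono (Fin.castSucc_lt_succ (i := i))).le⟩
    · exact ⟨(H.xs_mono (Fin.castSucc_lt_succ (i := i))).le.trans h.ge, h.le⟩
  have hb := seg_between (verts_mem_region hn hv) hcs hvin.1 hvin.2
  calc H.lhit v ≤ H.xs i.castSucc := hb.1
    _ < H.xs i.succ := H.xs_mono (Fin.castSucc_lt_succ (i := i))
    _ ≤ H.rhit v := hb.2

lemma inside_col (hn : H.n = 1) {v : ℝ × ℝ} (hv : v ∈ H.verts) (hv2 : v.2 < 0) (i : Fin H.m)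
    (h1 : H.xs i.castSucc < H.rhit v) (h2 : H.lhit v < H.xs i.succ) : H.d i ≤ v.2 := by
  have hvr := verts_mem_region hn hv
  set a := max (H.xs i.castSucc) (H.lhit v) with ha
  set b := min (H.xs i.succ) (H.rhit v) with hb
  have hab : a < b := by
    rw [ha, hb]
    apply max_lt <;> apply lt_min
    · exact H.xs_mono (Fin.castSucc_lt_succ (i := i))
    · exact h1
    · exact h2
    · exact bottom_strict hn hv hv2
  set x' := (a + b) / 2 with hx'
  have hax : a < x' := by rw [hx']; linarith
  have hxb : x' < b := by rw [hx']; linarith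
  have hreg : (x', v.2) ∈ H.region :=
    seg_full hvr x' ((le_max_right _ _).trans hax.le) (hxb.le.trans (min_le_right _ _))
  obtain ⟨j, hj1, hj2, hj3⟩ := (region_neg hv2).1 hreg
  have := col_unique (H := H) (i := i) (j := j)
    ((le_max_left _ _).trans_lt hax) (hxb.trans_le (min_le_left _ _)) hj1 hj2
  rwa [this] at hj3

lemma base_hits (hn : H.n = 1) {v : ℝ × ℝ} (hbase : v = H.baseL ∨ v = H.baseR) :
    H.lhit v = H.xs 0 ∧ H.rhit v = H.xs (Fin.last H.m) := by
  have hv : v ∈ H.verts := by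
    rcases hbase with h | h
    · rw [h]; exact baseL_mem hn
    · rw [h]; exact baseR_mem hn
  have hvr := verts_mem_region hn hv
  have hxs0M : H.xs 0 ≤ H.xs (Fin.last H.m) := H.xs_mono.monotone (Fin.zero_le _)
  have hseg : H.seg (H.xs 0) (H.xs (Fin.last H.m)) v.2 := by
    intro x hx1 hx2
    have hy : v.2 = H.hzero := by rcases hbase with h | h <;> rw [h] <;> rfl
    rw [hy]
    exact top_box hn hx1 hx2 hzero_pos.le le_rfl
  have hv1a : H.xs 0 ≤ v.1 := (region_bounds hvr).1
  have hv1b : v.1 ≤ H.xs (Fin.last H.m) := (region_bounds hvr).2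
  have hb := seg_between hvr hseg hv1a hv1b
  exact ⟨le_antisymm hb.1 (xs0_le_lhit hvr), le_antisymm (rhit_le_xsM hvr) hb.2⟩

end DoubleHistogram
namespace DoubleHistogram

variable {H : DoubleHistogram}

lemma rgate (hn : H.n = 1) {v : ℝ × ℝ} (hv : v ∈ H.verts) (hv2 : v.2 < 0)
    (hR : H.rhit v < H.xs (Fin.last H.m)) :
    H.rptS v ∈ H.verts ∧ (H.rptS v).1 = H.rhit v ∧ v.2 < (H.rptS v).2 ∧ (H.rptS v).2 < 0 ∧
      ∀ y : ℝ, y < 0 → (H.rhit v, y) ∈ H.verts → v.2 < y → (H.rhit v, y) = H.rptS v := by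
  have hvr := verts_mem_region hn hv
  have hvh0 : v.2 ≤ H.hzero := hv2.le.trans hzero_pos.le
  have hreg : (H.rhit v, v.2) ∈ H.region := seg_rhit hvr _ (le_rhit hvr) le_rfl
  obtain ⟨i, hi1, hi2, hi3⟩ := (region_neg hv2).1 hreg
  -- rhit v = xs i.succ
  have hcs : H.seg (H.xs i.castSucc) (H.xs i.succ) v.2 := seg_up hn (col_seg i) hi3 hvh0
  have hsucc_le : H.xs i.succ ≤ H.rhit v := by
    have hu := seg_union (seg_full hvr) hcs ((lhit_le hvr).trans (le_rhit hvr)) le_rfl hi1 hi2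
    have hb := seg_between hvr hu ((min_le_left _ _).trans (lhit_le hvr))
      ((le_rhit hvr).trans (le_max_left _ _))
    exact (le_max_right _ _).trans hb.2
  have hR2 : H.rhit v = H.xs i.succ := le_antisymm hi2 hsucc_le
  -- the column to the right of rhit v
  have hilt : (i : ℕ) + 1 < H.m := by
    have hne : i.succ ≠ Fin.last H.m := by
      intro h
      rw [hR2, h] at hR
      exact lt_irrefl _ hR
    have h1 : (i.succ : ℕ) ≤ H.m := Nat.lt_succ_iff.1 i.succ.isLt
    have h2 : (i.succ : ℕ) ≠ H.m := fun h => hne (Fin.ext (by simpa using h))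
    have h3 : (i.succ : ℕ) = (i : ℕ) + 1 := rfl
    omega
  set k : Fin H.m := ⟨(i : ℕ) + 1, hilt⟩ with hkdef
  have hk : k.castSucc = i.succ := by apply Fin.ext; simp [hkdef]
  have hdk : v.2 < H.d k := by
    by_contra hcon
    push_neg at hcon
    have hcs2 : H.seg (H.xs k.castSucc) (H.xs k.succ) v.2 := seg_up hn (col_seg k) hcon hvh0
    rw [hk, ← hR2] at hcs2
    have hu := seg_union (seg_full hvr) hcs2 ((lhit_le hvr).trans (le_rhit hvr)) le_rfl
      le_rfl (by rw [hR2, ← hk]; exact (H.xs_mono (Fin.castSucc_lt_succ (i := k))).le)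
    have hb := seg_between hvr hu ((min_le_left _ _).trans (lhit_le hvr))
      ((le_rhit hvr).trans (le_max_left _ _))
    have : H.xs k.succ ≤ H.rhit v := (le_max_right _ _).trans hb.2
    have hlt : H.rhit v < H.xs k.succ := by
      calc H.rhit v = H.xs k.castSucc := by rw [hR2, hk]
        _ < H.xs k.succ := H.xs_mono (Fin.castSucc_lt_succ (i := k))
    linarith
  -- the set of vertex ordinates at rhit v
  have hset : {y : ℝ | y < 0 ∧ (H.rhit v, y) ∈ H.verts} = {H.d i, H.d k} := by
    ext y
    simp only [Set.mem_setOf_eq, Set.mem_insert_iff, Set.mem_singleton_iff]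
    constructor
    · rintro ⟨hy0, hyv⟩
      rcases (verts_char hn).1 hyv with ⟨j, hj | hj⟩ | hj | hj
      · have h1 : H.xs j.castSucc = H.rhit v := (congrArg Prod.fst hj).symm
        have h2 : y = H.d j := congrArg Prod.snd hj
        rw [hR2, ← hk] at h1
        have : j = k := Fin.castSucc_inj.1 (H.xs_mono.injective h1)
        right; rw [h2, this]
      · have h1 : H.xs j.succ = H.rhit v := (congrArg Prod.fst hj).symm
        have h2 : y = H.d j := congrArg Prod.snd hj
        rw [hR2] at h1
        have : j = i := Fin.succ_inj.1 (H.xs_mono.injective h1)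
        left; rw [h2, this]
      · have : y = H.hzero := congrArg Prod.snd hj
        rw [this] at hy0; exact absurd hzero_pos (not_lt.2 hy0.le)
      · have : y = H.hzero := congrArg Prod.snd hj
        rw [this] at hy0; exact absurd hzero_pos (not_lt.2 hy0.le)
    · rintro (rfl | rfl)
      · exact ⟨H.d_neg i, (verts_char hn).2 (Or.inl ⟨i, Or.inr (by rw [hR2])⟩)⟩
      · exact ⟨H.d_neg k, (verts_char hn).2 (Or.inl ⟨k, Or.inl (by rw [hR2, ← hk])⟩)⟩
  have hnear : H.nearY (H.rhit v) v.2 = H.d k := by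
    rw [nearY, if_pos hv2, hset, csSup_pair]
    exact max_eq_right (hi3.trans hdk.le)
  have hrpt : H.rptS v = (H.rhit v, H.d k) := by
    rw [rptS, if_neg hR.ne, hnear]
  refine ⟨?_, ?_, ?_, ?_, ?_⟩
  · rw [hrpt]
    exact (verts_char hn).2 (Or.inl ⟨k, Or.inl (by rw [hR2, ← hk])⟩)
  · rw [hrpt]
  · rw [hrpt]; exact hdk
  · rw [hrpt]; exact H.d_neg k
  · intro y hy0 hyv hvy
    have : y ∈ ({H.d i, H.d k} : Set ℝ) := hset ▸ ⟨hy0, hyv⟩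
    rcases this with rfl | rfl
    · exact absurd hvy (not_lt.2 hi3)
    · rw [hrpt]

lemma lgate (hn : H.n = 1) {v : ℝ × ℝ} (hv : v ∈ H.verts) (hv2 : v.2 < 0)
    (hL : H.xs 0 < H.lhit v) :
    H.lptS v ∈ H.verts ∧ (H.lptS v).1 = H.lhit v ∧ v.2 < (H.lptS v).2 ∧ (H.lptS v).2 < 0 ∧
      ∀ y : ℝ, y < 0 → (H.lhit v, y) ∈ H.verts → v.2 < y → (H.lhit v, y) = H.lptS v := by
  have hvr := verts_mem_region hn hv
  have hvh0 : v.2 ≤ H.hzero := hv2.le.trans hzero_pos.le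
  have hreg : (H.lhit v, v.2) ∈ H.region := seg_lhit hvr _ le_rfl (lhit_le hvr)
  obtain ⟨j, hj1, hj2, hj3⟩ := (region_neg hv2).1 hreg
  have hcs : H.seg (H.xs j.castSucc) (H.xs j.succ) v.2 := seg_up hn (col_seg j) hj3 hvh0
  have hle_cast : H.lhit v ≤ H.xs j.castSucc := by
    have hu := seg_union (seg_full hvr) hcs le_rfl ((lhit_le hvr).trans (le_rhit hvr)) hj1 hj2
    have hb := seg_between hvr hu ((min_le_left _ _).trans (lhit_le hvr))
      ((le_rhit hvr).trans (le_max_left _ _))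
    exact hb.1.trans (min_le_right _ _)
  have hL2 : H.lhit v = H.xs j.castSucc := le_antisymm hle_cast hj1
  have hjpos : 0 < (j : ℕ) := by
    by_contra hcon
    push_neg at hcon
    have hj0 : (j : ℕ) = 0 := Nat.le_zero.1 hcon
    have : j.castSucc = (0 : Fin (H.m + 1)) := Fin.ext (by simp [hj0])
    rw [hL2, this] at hL
    exact lt_irrefl _ hL
  set k : Fin H.m := ⟨(j : ℕ) - 1, lt_of_le_of_lt (Nat.sub_le _ _) j.isLt⟩ with hkdef
  have hk : k.succ = j.castSucc := by apply Fin.ext; simp [hkdef]; omega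
  have hdk : v.2 < H.d k := by
    by_contra hcon
    push_neg at hcon
    have hcs2 : H.seg (H.xs k.castSucc) (H.xs k.succ) v.2 := seg_up hn (col_seg k) hcon hvh0
    rw [hk, ← hL2] at hcs2
    have hu := seg_union (seg_full hvr) hcs2 le_rfl ((lhit_le hvr).trans (le_rhit hvr))
      (by rw [hL2, ← hk]; exact (H.xs_mono (Fin.castSucc_lt_succ (i := k))).le) le_rfl
    have hb := seg_between hvr hu ((min_le_left _ _).trans (lhit_le hvr))
      ((le_rhit hvr).trans (le_max_left _ _))
    have h1 : H.lhit v ≤ H.xs k.castSucc := hb.1.trans (min_le_right _ _)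
    have h2 : H.xs k.castSucc < H.lhit v := by
      calc H.xs k.castSucc < H.xs k.succ := H.xs_mono (Fin.castSucc_lt_succ (i := k))
        _ = H.lhit v := by rw [hL2, hk]
    linarith
  have hset : {y : ℝ | y < 0 ∧ (H.lhit v, y) ∈ H.verts} = {H.d j, H.d k} := by
    ext y
    simp only [Set.mem_setOf_eq, Set.mem_insert_iff, Set.mem_singleton_iff]
    constructor
    · rintro ⟨hy0, hyv⟩
      rcases (verts_char hn).1 hyv with ⟨j', hj' | hj'⟩ | hj' | hj'
      · have h1 : H.xs j'.castSucc = H.lhit v := (congrArg Prod.fst hj').symm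
        have h2 : y = H.d j' := congrArg Prod.snd hj'
        rw [hL2] at h1
        have : j' = j := Fin.castSucc_inj.1 (H.xs_mono.injective h1)
        left; rw [h2, this]
      · have h1 : H.xs j'.succ = H.lhit v := (congrArg Prod.fst hj').symm
        have h2 : y = H.d j' := congrArg Prod.snd hj'
        rw [hL2, ← hk] at h1
        have : j' = k := Fin.succ_inj.1 (H.xs_mono.injective h1)
        right; rw [h2, this]
      · have : y = H.hzero := congrArg Prod.snd hj'
        rw [this] at hy0; exact absurd hzero_pos (not_lt.2 hy0.le)
      · have : y = H.hzero := congrArg Prod.snd hj'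
        rw [this] at hy0; exact absurd hzero_pos (not_lt.2 hy0.le)
    · rintro (rfl | rfl)
      · exact ⟨H.d_neg j, (verts_char hn).2 (Or.inl ⟨j, Or.inl (by rw [hL2])⟩)⟩
      · exact ⟨H.d_neg k, (verts_char hn).2 (Or.inl ⟨k, Or.inr (by rw [hL2, ← hk])⟩)⟩
  have hnear : H.nearY (H.lhit v) v.2 = H.d k := by
    rw [nearY, if_pos hv2, hset, csSup_pair]
    exact max_eq_right (hj3.trans hdk.le)
  have hlpt : H.lptS v = (H.lhit v, H.d k) := by
    rw [lptS, if_neg hL.ne', hnear]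
  refine ⟨?_, ?_, ?_, ?_, ?_⟩
  · rw [hlpt]
    exact (verts_char hn).2 (Or.inl ⟨k, Or.inr (by rw [hL2, ← hk])⟩)
  · rw [hlpt]
  · rw [hlpt]; exact hdk
  · rw [hlpt]; exact H.d_neg k
  · intro y hy0 hyv hvy
    have : y ∈ ({H.d j, H.d k} : Set ℝ) := hset ▸ ⟨hy0, hyv⟩
    rcases this with rfl | rfl
    · exact absurd hvy (not_lt.2 hj3)
    · rw [hlpt]

end DoubleHistogram
namespace DoubleHistogram

variable {H : DoubleHistogram}

lemma lptS_fst (v : ℝ × ℝ) : (H.lptS v).1 = H.lhit v := by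
  rw [lptS]
  split_ifs with h
  · rw [baseL_def, h]
  · rfl

lemma rptS_fst (v : ℝ × ℝ) : (H.rptS v).1 = H.rhit v := by
  rw [rptS]
  split_ifs with h
  · rw [baseR_def, h]
  · rfl

lemma top_gates (hn : H.n = 1) {v : ℝ × ℝ} (hbase : v = H.baseL ∨ v = H.baseR) :
    H.lptS v = H.baseL ∧ H.rptS v = H.baseR := by
  obtain ⟨h1, h2⟩ := base_hits hn hbase
  exact ⟨by rw [lptS, if_pos h1], by rw [rptS, if_pos h2]⟩

/-- Basic facts on the two gates of a bottom vertex. -/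
lemma gates_basic (hn : H.n = 1) {s : ℝ × ℝ} (hs : s ∈ H.verts) (hs2 : s.2 < 0) :
    H.lptS s ∈ H.verts ∧ s.2 < (H.lptS s).2 ∧ (H.lptS s).2 ≤ H.hzero ∧
      H.rptS s ∈ H.verts ∧ s.2 < (H.rptS s).2 ∧ (H.rptS s).2 ≤ H.hzero := by
  have hsr := verts_mem_region hn hs
  have hl : H.lptS s ∈ H.verts ∧ s.2 < (H.lptS s).2 := by
    rcases eq_or_lt_of_le (xs0_le_lhit hsr) with h | h
    · rw [lptS, if_pos h.symm]
      exact ⟨baseL_mem hn, hs2.trans hzero_pos⟩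
    · obtain ⟨h1, _, h3, _⟩ := lgate hn hs hs2 h
      exact ⟨h1, h3⟩
  have hr : H.rptS s ∈ H.verts ∧ s.2 < (H.rptS s).2 := by
    rcases eq_or_lt_of_le (rhit_le_xsM hsr) with h | h
    · rw [rptS, if_pos h]
      exact ⟨baseR_mem hn, hs2.trans hzero_pos⟩
    · obtain ⟨h1, _, h3, _⟩ := rgate hn hs hs2 h
      exact ⟨h1, h3⟩
  exact ⟨hl.1, hl.2, verts_y_le hn hl.1, hr.1, hr.2, verts_y_le hn hr.1⟩

/-- Any vertex in the interval of `s` lying strictly above `s` is one of the two gates. -/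
lemma gate_enum (hn : H.n = 1) {s b : ℝ × ℝ} (hs : s ∈ H.verts) (hs2 : s.2 < 0)
    (hb : b ∈ H.verts) (hby : s.2 < b.2)
    (hb1 : H.lhit s ≤ b.1) (hb2 : b.1 ≤ H.rhit s) :
    b = H.lptS s ∨ b = H.rptS s := by
  have hsr := verts_mem_region hn hs
  rcases verts_y_cases hn hb with hbneg | hbase
  · -- b is a bottom vertex
    obtain ⟨i, hform, hyi⟩ := own_col hn hb hbneg
    have hdis : H.xs i.castSucc ≤ b.1 ∧ b.1 ≤ H.xs i.succ := by
      rcases hform with h | h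
      · exact ⟨h.ge, h.le.trans (H.xs_mono (Fin.castSucc_lt_succ (i := i))).le⟩
      · exact ⟨(H.xs_mono (Fin.castSucc_lt_succ (i := i))).le.trans h.ge, h.le⟩
    have hnotin : ¬ (H.lhit s < b.1 ∧ b.1 < H.rhit s) := by
      rintro ⟨h1, h2⟩
      have := inside_col hn hs hs2 i (lt_of_le_of_lt hdis.1 h2) (lt_of_lt_of_le h1 hdis.2)
      rw [← hyi] at this
      exact absurd hby (not_lt.2 this)
    rcases eq_or_lt_of_le hb1 with hbl | hbl
    · -- b.1 = lhit s
      left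
      rcases eq_or_lt_of_le (xs0_le_lhit hsr) with hx0 | hx0
      · -- lhit s = xs 0 : impossible for a bottom vertex above s
        exfalso
        have hb10 : b.1 = H.xs 0 := by rw [← hbl, ← hx0]
        have hi0 : H.xs i.castSucc = H.xs 0 := by
          rcases hform with h | h
          · rw [← h, hb10]
          · exfalso
            have hlt : H.xs i.castSucc < H.xs i.succ := H.xs_mono (Fin.castSucc_lt_succ (i := i))
            have hle : H.xs 0 ≤ H.xs i.castSucc := H.xs_mono.monotone (Fin.zero_le _)
            rw [← h, hb10] at hlt
            linarith
        have hin := inside_col hn hs hs2 i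
          (by rw [hi0, hx0]; exact bottom_strict hn hs hs2)
          (by rw [← hx0, ← hi0]; exact H.xs_mono (Fin.castSucc_lt_succ (i := i)))
        rw [← hyi] at hin
        exact absurd hby (not_lt.2 hin)
      · obtain ⟨_, _, _, _, huniq⟩ := lgate hn hs hs2 hx0
        have hb' : b = (H.lhit s, b.2) := by
          rw [hbl]
        rw [hb']
        exact huniq b.2 hbneg (hb' ▸ hb) hby
    rcases eq_or_lt_of_le hb2 with hbr | hbr
    · -- b.1 = rhit s
      right
      rcases eq_or_lt_of_le (rhit_le_xsM hsr) with hxM | hxM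
      · exfalso
        have hb1M : b.1 = H.xs (Fin.last H.m) := by rw [hbr, hxM]
        have hiM : H.xs i.succ = H.xs (Fin.last H.m) := by
          rcases hform with h | h
          · exfalso
            have hlt : H.xs i.castSucc < H.xs i.succ := H.xs_mono (Fin.castSucc_lt_succ (i := i))
            have hle : H.xs i.succ ≤ H.xs (Fin.last H.m) := H.xs_mono.monotone (Fin.le_last _)
            rw [← h, hb1M] at hlt
            linarith
          · rw [← h, hb1M]
        have := inside_col hn hs hs2 i
          (by rw [hxM, ← hiM]; exact H.xs_mono (Fin.castSucc_lt_succ (i := i)))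
          (by rw [hiM, ← hxM]; exact bottom_strict hn hs hs2)
        rw [← hyi] at this
        exact absurd hby (not_lt.2 this)
      · obtain ⟨_, _, _, _, huniq⟩ := rgate hn hs hs2 hxM
        have hb' : b = (H.rhit s, b.2) := by
          rw [← hbr]
        rw [hb']
        exact huniq b.2 hbneg (hb' ▸ hb) hby
    · exact absurd ⟨hbl, hbr⟩ hnotin
  · -- b is a base vertex
    rcases hbase with hb' | hb'
    · left
      have hb1' : b.1 = H.xs 0 := by rw [hb', baseL_def]
      have : H.lhit s = H.xs 0 := le_antisymm (hb1' ▸ hb1) (xs0_le_lhit hsr)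
      rw [lptS, if_pos this, hb']
    · right
      have hb1' : b.1 = H.xs (Fin.last H.m) := by rw [hb', baseR_def]
      have : H.rhit s = H.xs (Fin.last H.m) := le_antisymm (rhit_le_xsM hsr) (hb1' ▸ hb2)
      rw [rptS, if_pos this, hb']

end DoubleHistogram
namespace DoubleHistogram

variable {H : DoubleHistogram}

/-- **Key lemma**: if `l` is a gate-level vertex inside the interval of `s`, `g` a higher
vertex inside the interval of `s`, and `c` a vertex outside the interval seen by `l`,
then `g` sees `c` as well. -/
lemma key_adj (hn : H.n = 1) {s g l c : ℝ × ℝ} (hs : s ∈ H.verts) (hs2 : s.2 < 0)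
    (hg : g ∈ H.verts) (hl : l ∈ H.verts) (hc : c ∈ H.verts)
    (hg1 : H.lhit s ≤ g.1) (hg2 : g.1 ≤ H.rhit s)
    (hl1 : H.lhit s ≤ l.1) (hl2 : l.1 ≤ H.rhit s)
    (hsl : s.2 ≤ l.2) (hlg : l.2 ≤ g.2)
    (hcov : H.covisible l c)
    (hcout : ¬ (H.lhit s ≤ c.1 ∧ c.1 ≤ H.rhit s)) :
    H.covisible g c ∧ g ≠ c := by
  have hsr := verts_mem_region hn hs
  have hlr := verts_mem_region hn hl
  have hcr := verts_mem_region hn hc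
  have hgne : g ≠ c := by
    intro h
    exact hcout (h ▸ ⟨hg1, hg2⟩)
  have hsegL : H.seg (H.lhit s) (H.rhit s) l.2 :=
    seg_up hn (seg_full hsr) hsl (verts_y_le hn hl)
  have hJl : H.lhit l ≤ H.lhit s ∧ H.rhit s ≤ H.rhit l := seg_between hlr hsegL hl1 hl2
  refine ⟨?_, hgne⟩
  rcases le_or_gt c.2 l.2 with hcl | hcl
  · -- `c` is lower than `l`
    have hcovc : H.covisible c l := H.covisible_symm hcov
    have hcJ : H.lhit c ≤ l.1 ∧ l.1 ≤ H.rhit c := (covisible_iff hn hc hl hcl).1 hcovc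
    have hsc : s.2 < c.2 := by
      refine cross_lemma hn hs (verts_y_le hn hc) (seg_full hcr)
        hcJ.1 hcJ.2 (lhit_le hcr) (le_rhit hcr) hl1 hl2 hcout
    have hsegC : H.seg (H.lhit s) (H.rhit s) c.2 :=
      seg_up hn (seg_full hsr) hsc.le (verts_y_le hn hc)
    have hu := seg_union hsegC (seg_full hcr) hl1 hl2 hcJ.1 hcJ.2
    have hb := seg_between hcr hu ((min_le_right _ _).trans (lhit_le hcr))
      ((le_rhit hcr).trans (le_max_right _ _))
    have hgJ : H.lhit c ≤ g.1 ∧ g.1 ≤ H.rhit c :=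
      ⟨hb.1.trans ((min_le_left _ _).trans hg1), hg2.trans ((le_max_left _ _).trans hb.2)⟩
    exact H.covisible_symm ((covisible_iff hn hc hg (hcl.trans hlg)).2 hgJ)
  · -- `c` is higher than `l`
    have hcJ : H.lhit l ≤ c.1 ∧ c.1 ≤ H.rhit l := (covisible_iff hn hl hc hcl.le).1 hcov
    rcases le_or_gt c.2 g.2 with hcg | hcg
    · -- `l.2 < c.2 ≤ g.2` : `J(l) ⊆ J(c)`, and `g.1 ∈ J(l)`
      have hJc := J_mono hn hl hc hcl.le hcJ.1 hcJ.2
      have hgJ : H.lhit c ≤ g.1 ∧ g.1 ≤ H.rhit c :=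
        ⟨hJc.1.trans (hJl.1.trans hg1), hg2.trans (hJl.2.trans hJc.2)⟩
      exact H.covisible_symm ((covisible_iff hn hc hg hcg).2 hgJ)
    · -- `c` is higher than `g` : `J(l) ⊆ J(g)` and `c.1 ∈ J(l)`
      have hgJ : H.lhit l ≤ g.1 ∧ g.1 ≤ H.rhit l :=
        ⟨hJl.1.trans hg1, hg2.trans hJl.2⟩
      have hJg := J_mono hn hl hg hlg hgJ.1 hgJ.2
      have hcJ' : H.lhit g ≤ c.1 ∧ c.1 ≤ H.rhit g :=
        ⟨hJg.1.trans hcJ.1, hcJ.2.trans hJg.2⟩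
      exact (covisible_iff hn hg hc hcg.le).2 hcJ'

/-! ### Graph-level lemmas -/

lemma verts_finite : H.verts.Finite :=
  Set.Finite.union
    (Set.finite_iUnion fun _ => (Set.finite_singleton _).insert _)
    (Set.finite_iUnion fun _ => (Set.finite_singleton _).insert _)

/-- Build an adjacency in the visibility graph from the interval characterization. -/
lemma adj_of (hn : H.n = 1) {u v : ↥H.verts}
    (hy : (u : ℝ × ℝ).2 ≤ (v : ℝ × ℝ).2)
    (h1 : H.lhit u ≤ (v : ℝ × ℝ).1) (h2 : (v : ℝ × ℝ).1 ≤ H.rhit u)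
    (hne : u ≠ v) : H.visGraph.Adj u v :=
  ⟨hne, (covisible_iff hn u.2 v.2 hy).2 ⟨h1, h2⟩⟩

/-- A walk from inside a region of vertices to outside contains a crossing edge. -/
lemma walk_split {V : Type} {G : SimpleGraph V} {P : V → Prop} :
    ∀ {a t : V} (p : G.Walk a t), P a → ¬ P t →
      ∃ (b c : V) (w1 : G.Walk a b) (w2 : G.Walk c t),
        G.Adj b c ∧ P b ∧ ¬ P c ∧ w1.length + 1 + w2.length = p.length := by
  intro a t p
  induction p with
  | nil => intro h1 h2; exact absurd h1 h2
  | @cons a u t h q ih =>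
    intro h1 h2
    by_cases hu : P u
    · obtain ⟨b, c, w1, w2, h3, h4, h5, h6⟩ := ih hu h2
      exact ⟨b, c, SimpleGraph.Walk.cons h w1, w2, h3, h4, h5, by
        simp only [SimpleGraph.Walk.length_cons]; omega⟩
    · exact ⟨a, u, SimpleGraph.Walk.nil, q, h, h1, hu, by
        simp only [SimpleGraph.Walk.length_cons, SimpleGraph.Walk.length_nil]; omega⟩

/-- The visibility graph of a simple histogram is connected through the left base vertex. -/
lemma reachable_baseL (hn : H.n = 1) (v : ↥H.verts) :
    H.visGraph.Reachable v ⟨H.baseL, baseL_mem hn⟩ := by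
  set base : ↥H.verts := ⟨H.baseL, baseL_mem hn⟩ with hbase
  have hfin := (verts_finite (H := H))
  set μ : ↥H.verts → ℕ := fun v =>
    (hfin.toFinset.filter fun w => (v : ℝ × ℝ).2 < w.2).card with hμ
  suffices hsuff : ∀ (n : ℕ) (v : ↥H.verts), μ v = n → H.visGraph.Reachable v base by
    exact hsuff (μ v) v rfl
  intro n
  induction n using Nat.strong_induction_on with
  | _ n ih =>
    intro v hv
    have hvr := verts_mem_region hn v.2
    rcases verts_y_cases hn v.2 with hneg | hb | hb
    · -- bottom vertex
      rcases eq_or_lt_of_le (xs0_le_lhit hvr) with h0 | h0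
      · -- sees the left base vertex
        refine SimpleGraph.Adj.reachable (adj_of hn (hneg.le.trans hzero_pos.le) ?_ ?_ ?_)
        · show H.lhit ↑v ≤ H.baseL.1
          rw [baseL_def, ← h0]
        · show H.baseL.1 ≤ H.rhit ↑v
          rw [baseL_def]
          exact h0.le.trans ((lhit_le hvr).trans (le_rhit hvr))
        · intro h
          rw [h] at hneg
          exact absurd hzero_pos (not_lt.2 (le_of_lt hneg))
      · -- go to the left gate
        obtain ⟨hg1, hg2, hg3, _, _⟩ := lgate hn v.2 hneg h0
        set gv : ↥H.verts := ⟨H.lptS ↑v, hg1⟩ with hgv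
        have hadj : H.visGraph.Adj v gv := by
          refine adj_of hn hg3.le ?_ ?_ ?_
          · rw [hgv]; show H.lhit ↑v ≤ (H.lptS ↑v).1; rw [hg2]
          · rw [hgv]; show (H.lptS ↑v).1 ≤ H.rhit ↑v
            rw [hg2]; exact (lhit_le hvr).trans (le_rhit hvr)
          · intro h
            have h2 : (↑v : ℝ × ℝ).2 = (H.lptS ↑v).2 :=
              congrArg (fun z : ↥H.verts => (z : ℝ × ℝ).2) h
            rw [h2] at hg3
            exact lt_irrefl _ hg3
        have hlt : μ gv < μ v := by
          apply Finset.card_lt_card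
          constructor
          · intro w hw
            rw [Finset.mem_filter] at hw ⊢
            exact ⟨hw.1, hg3.trans hw.2⟩
          · intro hsub
            have : H.lptS ↑v ∈ hfin.toFinset.filter fun w => (↑v : ℝ × ℝ).2 < w.2 := by
              rw [Finset.mem_filter]
              exact ⟨hfin.mem_toFinset.2 hg1, hg3⟩
            have h2 := hsub this
            rw [Finset.mem_filter] at h2
            exact lt_irrefl _ h2.2
        exact (hadj.reachable).trans (ih (μ gv) (hv ▸ hlt) gv rfl)
    · have hvb : v = base := Subtype.ext hb
      rw [hvb]
    · refine SimpleGraph.Adj.reachable ?_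
      have hne : (H.baseR : ℝ × ℝ) ≠ H.baseL := by
        intro h
        have := congrArg Prod.fst h
        rw [baseL_def, baseR_def] at this
        have hlt : H.xs 0 < H.xs (Fin.last H.m) :=
          H.xs_mono (by rw [Fin.lt_def]; simpa using H.hm)
        simp at this
        linarith
      refine adj_of hn ?_ ?_ ?_ ?_
      · show (↑v : ℝ × ℝ).2 ≤ H.baseL.2
        rw [hb, baseR_def, baseL_def]
      · show H.lhit ↑v ≤ H.baseL.1
        rw [baseL_def, (base_hits hn (Or.inr hb)).1]
      · show H.baseL.1 ≤ H.rhit ↑v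
        rw [baseL_def, (base_hits hn (Or.inr hb)).2]
        exact H.xs_mono.monotone (Fin.zero_le _)
      · intro h
        have := congrArg Subtype.val h
        rw [hb] at this
        exact hne this
  
end DoubleHistogram
namespace DoubleHistogram

variable {H : DoubleHistogram}

/-- The core argument: if `g` and `l` are the only vertices of `I(s)` strictly above `s`,
with `l` below `g`, then some shortest path from `s` to `t ∉ I(s)` passes through `g`. -/
lemma core (hn : H.n = 1) (s t : ↥H.verts) (hs2 : (s : ℝ × ℝ).2 < 0)
    (htr : ¬ (H.lhit ↑s ≤ (t : ℝ × ℝ).1 ∧ (t : ℝ × ℝ).1 ≤ H.rhit ↑s))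
    {g l : ℝ × ℝ} (hgv : g ∈ H.verts) (hlv : l ∈ H.verts)
    (hg1 : H.lhit ↑s ≤ g.1) (hg2 : g.1 ≤ H.rhit ↑s)
    (hl1 : H.lhit ↑s ≤ l.1) (hl2 : l.1 ≤ H.rhit ↑s)
    (hsl : (s : ℝ × ℝ).2 < l.2) (hlg : l.2 < g.2)
    (henum : ∀ b : ℝ × ℝ, b ∈ H.verts → (s : ℝ × ℝ).2 < b.2 →
      H.lhit ↑s ≤ b.1 → b.1 ≤ H.rhit ↑s → b = g ∨ b = l) :
    ∃ w : ↥H.verts, (w : ℝ × ℝ) = g ∧ H.OnShortestPath s t w := by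
  classical
  have hsr := verts_mem_region hn s.2
  obtain ⟨π, hπ⟩ :=
    ((reachable_baseL hn s).trans (reachable_baseL hn t).symm).exists_walk_length_eq_dist
  have hPs : H.lhit ↑s ≤ (s : ℝ × ℝ).1 ∧ (s : ℝ × ℝ).1 ≤ H.rhit ↑s :=
    ⟨lhit_le hsr, le_rhit hsr⟩
  obtain ⟨b, c, w1, w2, hadj, hPb, hPc, hlen⟩ :=
    walk_split (P := fun u : ↥H.verts => H.lhit ↑s ≤ (u : ℝ × ℝ).1 ∧ (u : ℝ × ℝ).1 ≤ H.rhit ↑s)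
      π hPs htr
  -- the crossing edge shows `s.2 < b.2`
  have hcovbc : H.covisible ↑b ↑c := hadj.2
  have hsb : (s : ℝ × ℝ).2 < (b : ℝ × ℝ).2 := by
    rcases le_total (b : ℝ × ℝ).2 (c : ℝ × ℝ).2 with hbc | hbc
    · have hbr := verts_mem_region hn b.2
      have hJ := (covisible_iff hn b.2 c.2 hbc).1 hcovbc
      exact cross_lemma hn s.2 (verts_y_le hn b.2) (seg_full hbr)
        (lhit_le hbr) (le_rhit hbr) hJ.1 hJ.2 hPb.1 hPb.2 hPc
    · have hcr := verts_mem_region hn c.2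
      have hJ := (covisible_iff hn c.2 b.2 hbc).1 (H.covisible_symm hcovbc)
      have hsc := cross_lemma hn s.2 (verts_y_le hn c.2) (seg_full hcr)
        hJ.1 hJ.2 (lhit_le hcr) (le_rhit hcr) hPb.1 hPb.2 hPc
      exact hsc.trans_le hbc
  rcases henum ↑b b.2 hsb hPb.1 hPb.2 with hbg | hbl
  · -- b = g : the path π reassembled passes through b
    refine ⟨b, hbg, w1.append (SimpleGraph.Walk.cons hadj w2), ?_, ?_⟩
    · rw [SimpleGraph.Walk.length_append, SimpleGraph.Walk.length_cons, ← hπ]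
      omega
    · rw [SimpleGraph.Walk.mem_support_append_iff]
      exact Or.inl (SimpleGraph.Walk.end_mem_support w1)
  · -- b = l : replace the prefix by s → g → c
    set gx : ↥H.verts := ⟨g, hgv⟩ with hgx
    have hcovlc : H.covisible l ↑c := by rw [← hbl]; exact hcovbc
    obtain ⟨hcovgc, hgnec⟩ :=
      key_adj hn s.2 hs2 hgv hlv c.2 hg1 hg2 hl1 hl2 hsl.le hlg.le hcovlc hPc
    have hadjgc : H.visGraph.Adj gx c :=
      ⟨fun h => hgnec (congrArg Subtype.val h), hcovgc⟩
    have hadjsg : H.visGraph.Adj s gx := by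
      refine adj_of hn ?_ hg1 hg2 ?_
      · exact (hsl.trans hlg).le
      · intro h
        have h2 : (s : ℝ × ℝ).2 = g.2 := congrArg (fun z : ↥H.verts => (z : ℝ × ℝ).2) h
        rw [h2] at hsl
        exact absurd hlg (not_lt.2 hsl.le)
    set W := SimpleGraph.Walk.cons hadjsg (SimpleGraph.Walk.cons hadjgc w2) with hW
    have hw1pos : 1 ≤ w1.length := by
      by_contra hcon
      push_neg at hcon
      have h0 : w1.length = 0 := by omega
      have hsb' : s = b := SimpleGraph.Walk.eq_of_length_eq_zero h0
      have : (s : ℝ × ℝ).2 = l.2 := by rw [hsb', hbl]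
      rw [this] at hsl
      exact lt_irrefl _ hsl
    have hWlen : W.length = H.visGraph.dist s t := by
      have hle : W.length ≤ π.length := by
        rw [hW]
        simp only [SimpleGraph.Walk.length_cons]
        omega
      have h1 := SimpleGraph.dist_le W
      rw [hπ] at hle
      omega
    refine ⟨gx, rfl, W, hWlen, ?_⟩
    rw [hW]
    simp [SimpleGraph.Walk.support_cons]

end DoubleHistogram

/-- In a simple histogram, let `t ∉ I(s)`.  If `ℓ(s)_y > r(s)_y` there is
a shortest path from `s` to `t` through `ℓ(s)`; if `ℓ(s)_y < r(s)_y` there is a shortest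
path from `s` to `t` through `r(s)`. -/
theorem taking_higher_is_better
    (H : DoubleHistogram) (hSimple : H.n = 1)
    (s t : ↥H.verts) (ht : (t : ℝ × ℝ) ∉ H.IvS (s : ℝ × ℝ)) :
    ((H.rptS (s : ℝ × ℝ)).2 < (H.lptS (s : ℝ × ℝ)).2 →
      ∃ w : ↥H.verts, (w : ℝ × ℝ) = H.lptS (s : ℝ × ℝ) ∧ H.OnShortestPath s t w) ∧
    ((H.lptS (s : ℝ × ℝ)).2 < (H.rptS (s : ℝ × ℝ)).2 →
      ∃ w : ↥H.verts, (w : ℝ × ℝ) = H.rptS (s : ℝ × ℝ) ∧ H.OnShortestPath s t w) := by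
  have hn := hSimple
  have htr : ¬ (H.lhit ↑s ≤ (t : ℝ × ℝ).1 ∧ (t : ℝ × ℝ).1 ≤ H.rhit ↑s) := by
    rintro ⟨h1, h2⟩
    refine ht ⟨t.2, ?_, ?_⟩
    · rw [DoubleHistogram.lptS_fst]; exact h1
    · rw [DoubleHistogram.rptS_fst]; exact h2
  rcases DoubleHistogram.verts_y_cases hn s.2 with hs2 | hbase
  · -- `s` is a bottom vertex
    obtain ⟨hgl, hsl2, _, hgr, hsr2, _⟩ := DoubleHistogram.gates_basic hn s.2 hs2
    have hsvr := DoubleHistogram.verts_mem_region hn s.2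
    have hlr : H.lhit ↑s ≤ H.rhit ↑s :=
      (DoubleHistogram.lhit_le hsvr).trans (DoubleHistogram.le_rhit hsvr)
    have hL1 : H.lhit ↑s ≤ (H.lptS ↑s).1 := by
      rw [DoubleHistogram.lptS_fst]
    have hL2 : (H.lptS ↑s).1 ≤ H.rhit ↑s := by
      rw [DoubleHistogram.lptS_fst]; exact hlr
    have hR1 : H.lhit ↑s ≤ (H.rptS ↑s).1 := by
      rw [DoubleHistogram.rptS_fst]; exact hlr
    have hR2 : (H.rptS ↑s).1 ≤ H.rhit ↑s := by
      rw [DoubleHistogram.rptS_fst]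
    constructor
    · intro hAB
      exact DoubleHistogram.core hn s t hs2 htr hgl hgr hL1 hL2 hR1 hR2 hsr2 hAB
        fun b h1 h2 h3 h4 => DoubleHistogram.gate_enum hn s.2 hs2 h1 h2 h3 h4
    · intro hBA
      exact DoubleHistogram.core hn s t hs2 htr hgr hgl hR1 hR2 hL1 hL2 hsl2 hBA
        fun b h1 h2 h3 h4 => (DoubleHistogram.gate_enum hn s.2 hs2 h1 h2 h3 h4).symm
  · -- `s` is a base vertex : impossible since then `I(s)` is everything
    exfalso
    obtain ⟨hl0, hrM⟩ := DoubleHistogram.base_hits hn hbase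
    have htb := DoubleHistogram.region_bounds (DoubleHistogram.verts_mem_region hn t.2)
    exact htr ⟨by rw [hl0]; exact htb.1, by rw [hrM]; exact htb.2⟩
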